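/- Let A = [a_0, a_1, …, a_{v−1}] be a complex sequence of length v = md, where m, d > 1 are integers, and let A^{(d)} be the m-compression of A. Then PSD_A(ms) = PSD_{A^{(d)}}(s) for all s = 0, 1, …, d−1, where PSD_A is computed with ω = exp(2πi/v) and PSD_{A^{(d)}} with ω_0 = exp(2πi/d). -/

import Mathlib

open Complex Finset

/-- Discrete Fourier transform of a sequence of length `v`:
`DFT_A(s) = ∑_{j<v} a_j ω^{js}` with `ω = exp(2πi/v)`. -/
noncomputable def dft (v : ℕ) (a : ℕ → ℂ) (s : ℕ) : ℂ :=
  ∑ j ∈ Finset.range v, a j * Complex.exp (2 * Real.pi * Complex.I * j * s / v)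

/-- Power spectral density: `PSD_A(s) = |DFT_A(s)|²`. -/
noncomputable def psd (v : ℕ) (a : ℕ → ℂ) (s : ℕ) : ℝ :=
  ‖dft v a s‖ ^ 2

/-- The `m`-compression of a sequence of length `v = d·m`:
`a_j^{(d)} = a_j + a_{j+d} + … + a_{j+(m−1)d}`. -/
noncomputable def compress (d m : ℕ) (a : ℕ → ℂ) (j : ℕ) : ℂ :=
  ∑ l ∈ Finset.range m, a (j + l * d)

lemma sum_range_mul' (m d : ℕ) (f : ℕ → ℂ) :
    ∑ j ∈ range (m * d), f j = ∑ l ∈ range m, ∑ r ∈ range d, f (r + l * d) := by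
  induction m with
  | zero => simp
  | succ n ih =>
      rw [Nat.succ_mul, Finset.sum_range_add, ih, Finset.sum_range_succ]
      congr 1
      exact Finset.sum_congr rfl fun r _ => by ring_nf

lemma exp_compress (m d l r s : ℕ) (hm : 0 < m) (hd : 0 < d) :
    Complex.exp (2 * Real.pi * Complex.I * (↑(r + l * d)) * (↑(m * s)) / (↑(m * d))) =
    Complex.exp (2 * Real.pi * Complex.I * r * s / d) := by
  have hd' : (d : ℂ) ≠ 0 := Nat.cast_ne_zero.mpr hd.ne'
  have hm' : (m : ℂ) ≠ 0 := Nat.cast_ne_zero.mpr hm.ne'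
  have : (2 * (Real.pi:ℂ) * Complex.I * (↑(r + l * d)) * (↑(m * s)) / (↑(m * d))) =
      2 * Real.pi * Complex.I * r * s / d + (l * s : ℕ) * (2 * Real.pi * Complex.I) := by
    push_cast
    field_simp
  rw [this, Complex.exp_add]
  rw [show ((l*s : ℕ) : ℂ) = ((l*s : ℤ) : ℂ) by push_cast; ring]
  rw [Complex.exp_int_mul_two_pi_mul_I]
  ring

theorem psd_compress (v m d : ℕ) (hm : 1 < m) (hd : 1 < d) (hv : v = m * d)
    (a : ℕ → ℂ) (s : ℕ) (hs : s < d) :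
    psd v a (m * s) = psd d (compress d m a) s := by
  have key : dft v a (m * s) = dft d (compress d m a) s := by
    unfold dft compress
    subst hv
    rw [sum_range_mul']
    rw [Finset.sum_comm]
    refine Finset.sum_congr rfl fun r _ => ?_
    rw [Finset.sum_mul]
    refine Finset.sum_congr rfl fun l _ => ?_
    rw [exp_compress m d l r s (by omega) (by omega)]
  unfold psd
  rw [key]
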